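/- Let A be a unital C*-algebra and let s, v ∈ A be isometries such that ‖s − v‖ < 2/(4√2 + 1). Then s and v are homotopic through isometries: there exists a norm-continuous path w : [0,1] → A with w(0) = s, w(1) = v, and w(t)*·w(t) = 1 for every t ∈ [0,1]. (In particular, s and v define the same class in the semigroup of homotopy classes of hyponormal partial isometries.) -/

import Mathlib

open Polynomial

/-- Let `A` be a unital C*-algebra and let `s, v ∈ A` be isometries with
`‖s − v‖ < 2/(4√2 + 1)`.  Then `s` and `v` are homotopic through isometries: there is a
norm-continuous path `w : [0,1] → A` with `w 0 = s`, `w 1 = v` and `w(t)* w(t) = 1` for all `t`. -/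
theorem stmt_5 {A : Type*} [CStarAlgebra A]
    (s v : A) (hs : star s * s = 1) (hv : star v * v = 1)
    (h : ‖s - v‖ < 2 / (4 * Real.sqrt 2 + 1)) :
    ∃ w : C(unitInterval, A), w 0 = s ∧ w 1 = v ∧ ∀ t, star (w t) * w t = 1 := by
  rcases subsingleton_or_nontrivial A with hA | hA
  · exact ⟨ContinuousMap.const _ s, Subsingleton.elim _ _, Subsingleton.elim _ _,
      fun t => Subsingleton.elim _ _⟩
  -- the difference `d` is small
  set d : A := v - s with hd
  have hsqrt2 : (1.414 : ℝ) ≤ Real.sqrt 2 := by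
    rw [show (1.414 : ℝ) = Real.sqrt (1.414 ^ 2) from (Real.sqrt_sq (by norm_num)).symm]
    exact Real.sqrt_le_sqrt (by norm_num)
  have h0 : (0 : ℝ) < 4 * Real.sqrt 2 + 1 := by positivity
  have hδ : ‖d‖ < 0.31 := by
    rw [hd, norm_sub_rev]
    refine h.trans_le ?_
    rw [div_le_iff₀ h0]
    nlinarith
  have hd0 : (0 : ℝ) ≤ ‖d‖ := norm_nonneg _
  have hnorm_s : ‖s‖ = 1 := by
    have h1 : ‖star s * s‖ = ‖s‖ * ‖s‖ := CStarRing.norm_star_mul_self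
    rw [hs, norm_one] at h1
    nlinarith [norm_nonneg s]
  -- the straight-line path and its "defect"
  set X : ℝ → A := fun t => s + t • d with hX
  set a : ℝ → A := fun t => star (X t) * X t with ha
  have hsa : ∀ t, IsSelfAdjoint (a t) := fun t => IsSelfAdjoint.star_mul_self (X t)
  have expand : ∀ t : ℝ,
      a t = 1 + (t • (star s * d + star d * s) + (t * t) • (star d * d)) := by
    intro t
    simp only [ha, hX, star_add, star_smul, star_trivial, add_mul, mul_add,
      smul_mul_assoc, mul_smul_comm, smul_smul, hs, smul_add]
    abel
  have hab : ∀ t ∈ Set.Icc (0 : ℝ) 1, ‖a t - 1‖ ≤ 0.72 := by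
    intro t ht
    have h1 : ‖star s * d + star d * s‖ ≤ 2 * ‖d‖ := by
      calc ‖star s * d + star d * s‖ ≤ ‖star s * d‖ + ‖star d * s‖ := norm_add_le _ _
        _ ≤ ‖star s‖ * ‖d‖ + ‖star d‖ * ‖s‖ := by
            gcongr <;> exact norm_mul_le _ _
        _ = 2 * ‖d‖ := by rw [norm_star, norm_star, hnorm_s]; ring
    have h2 : ‖star d * d‖ = ‖d‖ * ‖d‖ := CStarRing.norm_star_mul_self
    have h3 : a t - 1 = t • (star s * d + star d * s) + (t * t) • (star d * d) := by
      rw [expand t]; abel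
    rw [h3]
    calc ‖t • (star s * d + star d * s) + (t * t) • (star d * d)‖
        ≤ ‖t • (star s * d + star d * s)‖ + ‖(t * t) • (star d * d)‖ := norm_add_le _ _
      _ = |t| * ‖star s * d + star d * s‖ + |t * t| * ‖star d * d‖ := by
          rw [norm_smul, norm_smul, Real.norm_eq_abs, Real.norm_eq_abs]
      _ ≤ 0.72 := by
          rw [abs_of_nonneg ht.1, abs_of_nonneg (mul_nonneg ht.1 ht.1), h2]
          have k1 : t * ‖star s * d + star d * s‖ ≤ 2 * ‖d‖ := by
            calc t * ‖star s * d + star d * s‖ ≤ 1 * ‖star s * d + star d * s‖ := by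
                  gcongr; exact ht.2
              _ ≤ 2 * ‖d‖ := by rw [one_mul]; exact h1
          have k2 : t * t * (‖d‖ * ‖d‖) ≤ ‖d‖ * ‖d‖ := by
            have : t * t ≤ 1 := by nlinarith [ht.1, ht.2]
            nlinarith [mul_nonneg hd0 hd0]
          nlinarith
  -- spectral bounds
  have h_spec : ∀ t ∈ Set.Icc (0 : ℝ) 1,
      spectrum ℝ (a t) ⊆ Set.Icc (0.28 : ℝ) 1.72 := by
    intro t ht r hr
    have h1 : r - 1 ∈ spectrum ℝ (a t - algebraMap ℝ A 1) := by
      rw [← spectrum.sub_singleton_eq]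
      exact Set.sub_mem_sub hr rfl
    rw [map_one] at h1
    have h2 : ‖r - 1‖ ≤ ‖a t - 1‖ := spectrum.norm_le_norm_of_mem h1
    have h3 := hab t ht
    rw [Real.norm_eq_abs, abs_le] at h2
    constructor <;> linarith [h2.1, h2.2]
  -- the correcting function
  set g : ℝ → ℝ := fun r => (Real.sqrt r)⁻¹ with hg
  have hgc : ContinuousOn g (Set.Icc (0.28 : ℝ) 1.72) := by
    refine Real.continuous_sqrt.continuousOn.inv₀ fun r hr => ?_
    exact Real.sqrt_ne_zero'.mpr (by linarith [hr.1])
  have hg_spec : ∀ t ∈ Set.Icc (0 : ℝ) 1, ContinuousOn g (spectrum ℝ (a t)) :=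
    fun t ht => hgc.mono (h_spec t ht)
  set b : ℝ → A := fun t => cfc g (a t) with hb
  have hb_sa : ∀ t, IsSelfAdjoint (b t) := fun t => cfc_predicate g (a t)
  -- isometry along the path
  have hisom : ∀ t ∈ Set.Icc (0 : ℝ) 1, star (X t * b t) * (X t * b t) = 1 := by
    intro t ht
    have e1 : star (X t * b t) * (X t * b t) = b t * a t * b t := by
      rw [star_mul, (hb_sa t).star_eq, ha]
      simp only [mul_assoc]
    rw [e1]
    have e2 : b t * a t * b t = cfc (fun r => g r * r * g r) (a t) := by
      rw [show (fun r : ℝ => g r * r * g r) = (fun r : ℝ => (g r * r) * g r) from rfl,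
        cfc_mul (fun r : ℝ => g r * r) g (a t)
          (((hg_spec t ht).mul continuousOn_id)) (hg_spec t ht),
        cfc_mul g (fun r : ℝ => r) (a t) (hg_spec t ht) continuousOn_id,
        cfc_id' ℝ (a t) (hsa t)]
    rw [e2]
    have e3 : cfc (fun r => g r * r * g r) (a t) = cfc (fun _ : ℝ => (1 : ℝ)) (a t) := by
      apply cfc_congr
      intro r hr
      have hr' := h_spec t ht hr
      have hr0 : (0 : ℝ) < r := by linarith [hr'.1]
      have hsr : (0 : ℝ) < Real.sqrt r := Real.sqrt_pos.mpr hr0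
      have : Real.sqrt r * Real.sqrt r = r := Real.mul_self_sqrt hr0.le
      field_simp [hg]
      simp only [hg, inv_pow, Real.sq_sqrt hr0.le, inv_mul_cancel₀ hr0.ne']
    rw [e3, cfc_const_one ℝ (a t) (hsa t)]
  -- endpoints
  have hX0 : X 0 = s := by simp [hX]
  have hX1 : X 1 = v := by simp [hX, hd]
  have hb0 : b 0 = 1 := by
    have ha0 : a 0 = algebraMap ℝ A 1 := by rw [ha]; simp [hX0, hs]
    show cfc g (a 0) = 1
    rw [ha0, cfc_algebraMap, hg]
    simp
  have hb1 : b 1 = 1 := by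
    have ha1 : a 1 = algebraMap ℝ A 1 := by rw [ha]; simp [hX1, hv]
    show cfc g (a 1) = 1
    rw [ha1, cfc_algebraMap, hg]
    simp
  -- continuity
  have hXc : Continuous X := by
    rw [hX]; exact continuous_const.add (continuous_id.smul continuous_const)
  have hac : Continuous a := by
    rw [ha]; exact (continuous_star.comp hXc).mul hXc
  have hBc : Continuous (fun u : unitInterval => b (u : ℝ)) := by
    rw [Metric.continuous_iff]
    intro t ε hε
    obtain ⟨p, hp⟩ := exists_polynomial_near_of_continuousOn 0.28 1.72 g hgc (ε / 3)
      (by linarith)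
    have happrox : ∀ u : unitInterval, ‖b (u : ℝ) - aeval (a (u : ℝ)) p‖ ≤ ε / 3 := by
      intro u
      have hu : (u : ℝ) ∈ Set.Icc (0 : ℝ) 1 := u.2
      show ‖cfc g (a (u : ℝ)) - aeval (a (u : ℝ)) p‖ ≤ ε / 3
      rw [← cfc_polynomial p (a (u : ℝ)) (hsa _),
        ← cfc_sub g p.eval (a (u : ℝ)) (hg_spec _ hu) (p.continuous.continuousOn)]
      refine norm_cfc_le (by linarith) fun r hr => ?_
      have := hp r (h_spec _ hu hr)
      rw [Real.norm_eq_abs, abs_sub_comm]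
      linarith
    have hPc : Continuous (fun u : unitInterval => aeval (a (u : ℝ)) p) :=
      p.continuous_aeval.comp (hac.comp continuous_subtype_val)
    rcases Metric.continuous_iff.mp hPc t (ε / 3) (by linarith) with ⟨δ, hδ0, hδball⟩
    refine ⟨δ, hδ0, fun u hu => ?_⟩
    calc dist (b (u : ℝ)) (b (t : ℝ))
        ≤ dist (b (u : ℝ)) (aeval (a (u : ℝ)) p) + dist (aeval (a (u : ℝ)) p)
            (aeval (a (t : ℝ)) p) + dist (aeval (a (t : ℝ)) p) (b (t : ℝ)) :=
          dist_triangle4 _ _ _ _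
      _ < ε := by
          simp only [dist_eq_norm] at hδball ⊢
          have h1 := happrox u
          have h2' : ‖aeval (a (t : ℝ)) p - b (t : ℝ)‖ ≤ ε / 3 := by
            rw [norm_sub_rev]; exact happrox t
          linarith [hδball u hu]
  refine ⟨⟨fun u => X (u : ℝ) * b (u : ℝ),
    ((hXc.comp continuous_subtype_val).mul hBc)⟩, ?_, ?_, fun u => ?_⟩
  · show X ((0 : unitInterval) : ℝ) * b ((0 : unitInterval) : ℝ) = s
    rw [show ((0 : unitInterval) : ℝ) = 0 from rfl, hX0, hb0, mul_one]
  · show X ((1 : unitInterval) : ℝ) * b ((1 : unitInterval) : ℝ) = v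
    rw [show ((1 : unitInterval) : ℝ) = 1 from rfl, hX1, hb1, mul_one]
  · exact hisom (u : ℝ) u.2
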